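/- Let d ≥ 1, let n = 2d, and let Δ be a well-distributed f-simplicial complex on [n]. Then Δ^c is also a well-distributed f-simplicial complex on [n]. -/

import Mathlib

open Finset

/-- `Δ`, given as the finset of its faces, is a simplicial complex on the vertex
set `Fin n`: a nonempty collection of subsets closed under taking subsets. -/
def IsComplex {n : ℕ} (Δ : Finset (Finset (Fin n))) : Prop :=
  Δ.Nonempty ∧ ∀ A ∈ Δ, ∀ B ⊆ A, B ∈ Δ

/-- The facets (maximal faces) of `Δ`. -/
def facets {n : ℕ} (Δ : Finset (Finset (Fin n))) : Finset (Finset (Fin n)) :=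
  Δ.filter fun F => ∀ G ∈ Δ, F ⊆ G → F = G

/-- The simplicial complex generated by a family `𝔉`: all subsets of members of `𝔉`. -/
def generated {n : ℕ} (𝔉 : Finset (Finset (Fin n))) : Finset (Finset (Fin n)) :=
  univ.filter fun A => ∃ F ∈ 𝔉, A ⊆ F

/-- The Newton complement dual `Δ^c`: the complex generated by the complements
of the facets of `Δ`. -/
def cdual {n : ℕ} (Δ : Finset (Finset (Fin n))) : Finset (Finset (Fin n)) :=
  generated ((facets Δ).image fun F => Fᶜ)

/-- The nonface complex of `Δ`: all subsets of `[n]` containing no facet of `Δ`. -/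
def nonfaceComplex {n : ℕ} (Δ : Finset (Finset (Fin n))) : Finset (Finset (Fin n)) :=
  univ.filter fun A => ∀ F ∈ facets Δ, ¬ F ⊆ A

/-- `Δ` is an `f`-simplicial complex: for every `k`, `Δ` and its nonface complex
have the same number of `k`-element members (the same `f`-vector). -/
def IsFComplex {n : ℕ} (Δ : Finset (Finset (Fin n))) : Prop :=
  ∀ k : ℕ, (Δ.filter fun A => A.card = k).card =
    ((nonfaceComplex Δ).filter fun A => A.card = k).card

/-- `Δ` is pure `(d-1)`-dimensional: every facet has exactly `d` elements. -/
def PureDim {n : ℕ} (d : ℕ) (Δ : Finset (Finset (Fin n))) : Prop :=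
  ∀ F ∈ facets Δ, F.card = d

/-- The minimal nonfaces of `Δ`: sets that are not faces but all of whose proper
subsets are faces. -/
def minNonfaces {n : ℕ} (Δ : Finset (Finset (Fin n))) : Finset (Finset (Fin n)) :=
  univ.filter fun A => A ∉ Δ ∧ ∀ B ⊂ A, B ∈ Δ

/-- The Alexander dual `Δ^∨`: the complex whose facets are the complements of the
minimal nonfaces of `Δ`. -/
def adual {n : ℕ} (Δ : Finset (Finset (Fin n))) : Finset (Finset (Fin n)) :=
  generated ((minNonfaces Δ).image fun F => Fᶜ)

/-- The homogeneous complement `Δ'` (in degree `e`): the complex generated by the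
`e`-element subsets of `[n]` that are not facets of `Δ`. -/
def hcompl {n : ℕ} (e : ℕ) (Δ : Finset (Finset (Fin n))) : Finset (Finset (Fin n)) :=
  generated (univ.filter fun A : Finset (Fin n) => A.card = e ∧ A ∉ facets Δ)

lemma mem_generated' {n : ℕ} {𝔉 : Finset (Finset (Fin n))} {A : Finset (Fin n)} :
    A ∈ generated 𝔉 ↔ ∃ F ∈ 𝔉, A ⊆ F := by simp [generated]

/-- Every face is contained in a facet. -/
lemma exists_facet' {n : ℕ} {Δ : Finset (Finset (Fin n))}
    {A : Finset (Fin n)} (hA : A ∈ Δ) : ∃ F ∈ facets Δ, A ⊆ F := by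
  obtain ⟨m, hm, hmax⟩ : ∃ m ∈ Δ.filter (fun B => A ⊆ B), ∀ x ∈ Δ.filter (fun B => A ⊆ B), ¬ m < x := by
    obtain ⟨m, hm⟩ := Finset.exists_maximal (s := Δ.filter fun B => A ⊆ B)
      ⟨A, by simp [hA]⟩
    exact ⟨m, hm.1, fun x hx hlt => lt_irrefl _ (lt_of_lt_of_le hlt (hm.2 hx hlt.le))⟩
  simp only [mem_filter] at hm
  refine ⟨m, ?_, hm.2⟩
  simp only [facets, mem_filter]
  refine ⟨hm.1, fun G hG hsub => ?_⟩
  by_contra hne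
  exact hmax G (by simp [hG, hm.2.trans hsub]) (lt_of_le_of_ne hsub hne)

lemma mem_iff_subset_facet' {n : ℕ} {Δ : Finset (Finset (Fin n))} (hΔ : IsComplex Δ)
    {A : Finset (Fin n)} : A ∈ Δ ↔ ∃ F ∈ facets Δ, A ⊆ F := by
  constructor
  · exact exists_facet'
  · rintro ⟨F, hF, hsub⟩
    simp only [facets, mem_filter] at hF
    exact hΔ.2 F hF.1 A hsub

lemma facets_generated' {n d : ℕ} {𝔉 : Finset (Finset (Fin n))}
    (h : ∀ F ∈ 𝔉, F.card = d) : facets (generated 𝔉) = 𝔉 := by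
  ext A
  simp only [facets, mem_filter, mem_generated']
  constructor
  · rintro ⟨⟨F, hF, hAF⟩, hmax⟩
    rwa [hmax F ⟨F, hF, Subset.rfl⟩ hAF]
  · intro hA
    refine ⟨⟨A, hA, Subset.rfl⟩, fun G hG hAG => ?_⟩
    obtain ⟨F, hF, hGF⟩ := hG
    have : G.card ≤ d := (h F hF) ▸ card_le_card hGF
    exact (eq_of_subset_of_card_le hAG (by rw [h A hA]; exact this)).symm ▸ rfl

lemma facets_cdual' {n d : ℕ} (hn : n = 2 * d) {Δ : Finset (Finset (Fin n))}
    (hpure : PureDim d Δ) : facets (cdual Δ) = (facets Δ).image fun F => Fᶜ := by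
  refine facets_generated' (d := d) ?_
  intro F hF
  simp only [mem_image] at hF
  obtain ⟨G, hG, rfl⟩ := hF
  rw [card_compl, Fintype.card_fin, hpure G hG, hn]
  omega

lemma compl_mem_cdual_iff {n : ℕ} {Δ : Finset (Finset (Fin n))} {B : Finset (Fin n)} :
    Bᶜ ∈ cdual Δ ↔ ∃ F ∈ facets Δ, F ⊆ B := by
  rw [cdual, mem_generated']
  constructor
  · rintro ⟨G, hG, hBG⟩
    simp only [mem_image] at hG
    obtain ⟨F, hF, rfl⟩ := hG
    exact ⟨F, hF, by simpa using compl_subset_compl.mp (by simpa using hBG)⟩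
  · rintro ⟨F, hF, hFB⟩
    exact ⟨Fᶜ, mem_image_of_mem _ hF, compl_subset_compl.mpr hFB⟩

/-- if `Δ` is a well-distributed `f`-simplicial complex (`n = 2d`, pure
`(d-1)`-dimensional, `F(Δ) ∩ F(Δ^c) = ∅`), then so is `Δ^c`. -/
theorem stmt4 {d n : ℕ} (hd : 1 ≤ d) (hn : n = 2 * d)
    (Δ : Finset (Finset (Fin n))) (hΔ : IsComplex Δ) (hpure : PureDim d Δ)
    (hf : IsFComplex Δ) (hwd : facets Δ ∩ facets (cdual Δ) = ∅) :
    IsComplex (cdual Δ) ∧ PureDim d (cdual Δ) ∧ IsFComplex (cdual Δ) ∧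
      facets (cdual Δ) ∩ facets (cdual (cdual Δ)) = ∅ := by
  have hfc : facets (cdual Δ) = (facets Δ).image fun F => Fᶜ := facets_cdual' hn hpure
  have hfnonempty : (facets Δ).Nonempty := by
    obtain ⟨A, hA⟩ := hΔ.1
    obtain ⟨F, hF, -⟩ := exists_facet' hA
    exact ⟨F, hF⟩
  have hfcc : facets (cdual (cdual Δ)) = facets Δ := by
    have himg : (facets (cdual Δ)).image (fun F => Fᶜ) = facets Δ := by
      rw [hfc, Finset.image_image]
      simp [Function.comp_def]
    rw [cdual, himg]
    exact facets_generated' hpure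
  have hcomplex : IsComplex (cdual Δ) := by
    constructor
    · obtain ⟨F, hF⟩ := hfnonempty
      exact ⟨Fᶜ, mem_generated'.mpr ⟨Fᶜ, mem_image_of_mem _ hF, Subset.rfl⟩⟩
    · intro A hA B hB
      obtain ⟨F, hF, hAF⟩ := mem_generated'.mp hA
      exact mem_generated'.mpr ⟨F, hF, hB.trans hAF⟩
  have hpurec : PureDim d (cdual Δ) := by
    intro F hF
    rw [hfc] at hF
    obtain ⟨G, hG, rfl⟩ := mem_image.mp hF
    rw [card_compl, Fintype.card_fin, hpure G hG, hn]
    omega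
  refine ⟨hcomplex, hpurec, ?_, by rw [hfcc, inter_comm]; exact hwd⟩
  intro k
  have hcard_le : ∀ A : Finset (Fin n), A.card ≤ n := fun A => by
    simpa using card_le_univ A
  by_cases hk : k ≤ n
  · set m := n - k with hm
    -- membership characterizations under complementation
    have hE1 : ((cdual Δ).filter fun A => A.card = k).image (fun A => Aᶜ)
        = univ.filter fun B => B.card = m ∧ ∃ F ∈ facets Δ, F ⊆ B := by
      ext B
      simp only [mem_image, mem_filter, mem_univ, true_and]
      constructor
      · rintro ⟨A, ⟨hA, hAk⟩, rfl⟩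
        refine ⟨by rw [card_compl, Fintype.card_fin, hAk], ?_⟩
        have := compl_mem_cdual_iff (Δ := Δ) (B := Aᶜ)
        rw [compl_compl] at this
        exact this.mp hA
      · rintro ⟨hBm, hFB⟩
        refine ⟨Bᶜ, ⟨compl_mem_cdual_iff.mpr hFB, ?_⟩, compl_compl B⟩
        rw [card_compl, Fintype.card_fin]
        have := hcard_le B
        omega
    have hE2 : ((nonfaceComplex (cdual Δ)).filter fun A => A.card = k).image (fun A => Aᶜ)
        = univ.filter fun B => B.card = m ∧ B ∉ Δ := by
      ext B
      simp only [mem_image, mem_filter, mem_univ, true_and, nonfaceComplex]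
      constructor
      · rintro ⟨A, ⟨hA, hAk⟩, rfl⟩
        refine ⟨by rw [card_compl, Fintype.card_fin, hAk], ?_⟩
        intro hBΔ
        obtain ⟨F, hF, hBF⟩ := (mem_iff_subset_facet' hΔ).mp hBΔ
        exact hA Fᶜ (hfc ▸ mem_image_of_mem _ hF) (by simpa using compl_subset_compl.mpr hBF)
      · rintro ⟨hBm, hBΔ⟩
        refine ⟨Bᶜ, ⟨?_, ?_⟩, compl_compl B⟩
        · intro G hG hGB
          rw [hfc] at hG
          obtain ⟨F, hF, rfl⟩ := mem_image.mp hG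
          exact hBΔ ((mem_iff_subset_facet' hΔ).mpr ⟨F, hF, compl_subset_compl.mp hGB⟩)
        · rw [card_compl, Fintype.card_fin]
          have := hcard_le B
          omega
    have hinj : Function.Injective (fun A : Finset (Fin n) => Aᶜ) :=
      fun a b h => compl_injective h
    rw [← card_image_of_injective _ hinj, ← card_image_of_injective
      ((nonfaceComplex (cdual Δ)).filter fun A => A.card = k) hinj, hE1, hE2]
    -- now count within U = m-subsets
    set U : Finset (Finset (Fin n)) := univ.filter fun B => B.card = m with hU
    have e1 : (univ.filter fun B => B.card = m ∧ ∃ F ∈ facets Δ, F ⊆ B)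
        = U.filter fun B => ∃ F ∈ facets Δ, F ⊆ B := by
      rw [hU, filter_filter]
    have e2 : (univ.filter fun B => B.card = m ∧ B ∉ Δ)
        = U.filter fun B => B ∉ Δ := by
      rw [hU, filter_filter]
    have p1 := Finset.card_filter_add_card_filter_not
      (s := U) (p := fun B => ∃ F ∈ facets Δ, F ⊆ B)
    have p2 := Finset.card_filter_add_card_filter_not
      (s := U) (p := fun B => B ∉ Δ)
    have q1 : (U.filter fun B => ¬ ∃ F ∈ facets Δ, F ⊆ B)
        = (nonfaceComplex Δ).filter fun B => B.card = m := by
      ext B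
      simp only [hU, mem_filter, mem_univ, true_and, nonfaceComplex]
      push_neg
      tauto
    have q2 : (U.filter fun B => ¬ B ∉ Δ) = Δ.filter fun B => B.card = m := by
      ext B
      simp only [hU, mem_filter, mem_univ, true_and, not_not]
      tauto
    have := hf m
    rw [e1, e2]
    rw [q1] at p1
    rw [q2] at p2
    omega
  · rw [filter_eq_empty_iff.mpr, filter_eq_empty_iff.mpr]
    · intro A _
      intro h
      exact hk (h ▸ hcard_le A)
    · intro A _
      intro h
      exact hk (h ▸ hcard_le A)
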